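/- Fix a real κ > 1. For η > 0 put s(η) = ⌈√((κ−1)η/2)⌉ and define the effective ESGD convergence rate c(η) = ( T_{s(η)}(1 + η/s(η)²) )^{−2/s(η)}. Then lim_{η→∞} c(η) = (y − √(y²−1))², where y = 1 + 2/(κ−1). (Equivalently, the limit equals exp(−2·arcosh(1 + 2/(κ−1))).) -/

import Mathlib

open Polynomial Filter

/-! Auxiliary lemmas about `arcosh`-style quantities. -/

noncomputable def esgdAcosh (x : ℝ) : ℝ := Real.log (x + Real.sqrt (x ^ 2 - 1))

lemma esgd_arg_pos {x : ℝ} (hx : 1 ≤ x) : 0 < x + Real.sqrt (x ^ 2 - 1) := by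
  have := Real.sqrt_nonneg (x ^ 2 - 1); linarith

lemma esgd_mul_conj {x : ℝ} (hx : 1 ≤ x) :
    (x + Real.sqrt (x ^ 2 - 1)) * (x - Real.sqrt (x ^ 2 - 1)) = 1 := by
  have h : Real.sqrt (x ^ 2 - 1) ^ 2 = x ^ 2 - 1 := Real.sq_sqrt (by nlinarith)
  nlinarith [h]

lemma esgd_acosh_nonneg {x : ℝ} (hx : 1 ≤ x) : 0 ≤ esgdAcosh x :=
  Real.log_nonneg (by have := Real.sqrt_nonneg (x ^ 2 - 1); linarith)

lemma esgd_cosh_acosh {x : ℝ} (hx : 1 ≤ x) : Real.cosh (esgdAcosh x) = x := by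
  have hpos := esgd_arg_pos hx
  rw [esgdAcosh, Real.cosh_log hpos,
    inv_eq_of_mul_eq_one_right (esgd_mul_conj hx)]
  ring

lemma esgd_exp_neg_acosh {x : ℝ} (hx : 1 ≤ x) :
    Real.exp (-esgdAcosh x) = x - Real.sqrt (x ^ 2 - 1) := by
  have hpos := esgd_arg_pos hx
  rw [esgdAcosh, Real.exp_neg, Real.exp_log hpos,
    inv_eq_of_mul_eq_one_right (esgd_mul_conj hx)]

lemma T_real_cosh (t : ℝ) (n : ℤ) :
    (Polynomial.Chebyshev.T ℝ n).eval (Real.cosh t) = Real.cosh (n * t) := by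
  have h := Polynomial.Chebyshev.T_complex_cos ((t : ℂ) * Complex.I) n
  rw [Complex.cos_mul_I,
      show ((n : ℂ) * ((t : ℂ) * Complex.I)) = (((n : ℝ) * t : ℝ) : ℂ) * Complex.I by
        push_cast; ring,
      Complex.cos_mul_I] at h
  exact_mod_cast h

lemma esgd_log_cosh_le {w : ℝ} (hw : 0 ≤ w) : Real.log (Real.cosh w) ≤ w := by
  have h : Real.cosh w ≤ Real.exp w := by
    rw [Real.cosh_eq]
    have := Real.exp_le_exp.mpr (by linarith : -w ≤ w)
    linarith
  calc Real.log (Real.cosh w) ≤ Real.log (Real.exp w) :=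
        Real.log_le_log (Real.cosh_pos w) h
    _ = w := Real.log_exp w

lemma esgd_le_log_cosh (w : ℝ) : w - Real.log 2 ≤ Real.log (Real.cosh w) := by
  have h : Real.exp w / 2 ≤ Real.cosh w := by
    rw [Real.cosh_eq]
    have := (Real.exp_pos (-w)).le
    linarith
  have h2 : Real.log (Real.exp w / 2) ≤ Real.log (Real.cosh w) :=
    Real.log_le_log (by positivity) h
  rwa [Real.log_div (Real.exp_ne_zero w) two_ne_zero, Real.log_exp] at h2

lemma esgd_tendsto_sqrt_atTop : Filter.Tendsto Real.sqrt atTop atTop := by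
  apply Filter.tendsto_atTop_atTop.mpr
  intro b
  refine ⟨max (b ^ 2) 0, fun a ha => ?_⟩
  have h2 : Real.sqrt (b ^ 2) ≤ Real.sqrt a :=
    Real.sqrt_le_sqrt (le_trans (le_max_left _ _) ha)
  rw [Real.sqrt_sq_eq_abs] at h2
  exact le_trans (le_abs_self b) h2

lemma esgd_div_succ_tendsto : Filter.Tendsto (fun v : ℝ => v / (v + 1)) atTop (nhds 1) := by
  have h0 : Filter.Tendsto (fun v : ℝ => 1 - 1 / (v + 1)) atTop (nhds 1) := by
    have h1 : Filter.Tendsto (fun v : ℝ => 1 / (v + 1)) atTop (nhds 0) :=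
      Filter.Tendsto.div_atTop tendsto_const_nhds (tendsto_atTop_add_const_right _ 1 tendsto_id)
    simpa using tendsto_const_nhds.sub h1
  refine h0.congr' ?_
  filter_upwards [eventually_ge_atTop (1 : ℝ)] with v hv
  have : v + 1 ≠ 0 := by linarith
  field_simp
  ring

/-- Fix `κ > 1`. With `s(η) = ⌈√((κ−1)η/2)⌉` and effective ESGD rate
`c(η) = (T_{s(η)}(1 + η/s(η)²))^{−2/s(η)}`, we have
`lim_{η→∞} c(η) = (y − √(y²−1))²` where `y = 1 + 2/(κ−1)`. -/
theorem esgd_effective_rate_limit (κ : ℝ) (hκ : 1 < κ) :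
    Filter.Tendsto
      (fun η : ℝ =>
        ((Polynomial.Chebyshev.T ℝ ((⌈Real.sqrt ((κ - 1) * η / 2)⌉₊ : ℕ) : ℤ)).eval
            (1 + η / ((⌈Real.sqrt ((κ - 1) * η / 2)⌉₊ : ℕ) : ℝ) ^ 2)) ^
          (-2 / ((⌈Real.sqrt ((κ - 1) * η / 2)⌉₊ : ℕ) : ℝ)))
      Filter.atTop
      (nhds ((1 + 2 / (κ - 1) - Real.sqrt ((1 + 2 / (κ - 1)) ^ 2 - 1)) ^ 2)) := by
  have hκ1 : 0 < κ - 1 := by linarith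
  set y : ℝ := 1 + 2 / (κ - 1) with hy_def
  have hy1 : 1 < y := by
    have : 0 < 2 / (κ - 1) := by positivity
    simp only [hy_def]; linarith
  set u : ℝ → ℝ := fun η => Real.sqrt ((κ - 1) * η / 2) with hu_def
  set s : ℝ → ℕ := fun η => ⌈u η⌉₊ with hs_def
  set x : ℝ → ℝ := fun η => 1 + η / (s η : ℝ) ^ 2 with hx_def
  -- basic eventual facts
  have hbasic : ∀ η : ℝ, 1 ≤ η →
      0 < u η ∧ (0 : ℝ) < (s η : ℝ) ∧ u η ≤ (s η : ℝ) ∧ (s η : ℝ) ≤ u η + 1 ∧ 1 ≤ x η := by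
    intro η hη
    have hη0 : 0 < η := by linarith
    have hu0 : 0 < u η := Real.sqrt_pos.mpr (by positivity)
    have hs0 : 0 < s η := Nat.ceil_pos.mpr hu0
    have hsR : (0 : ℝ) < (s η : ℝ) := by exact_mod_cast hs0
    have hle : u η ≤ (s η : ℝ) := Nat.le_ceil _
    have hub : (s η : ℝ) ≤ u η + 1 := by
      have := Nat.ceil_lt_add_one (le_of_lt hu0)
      exact le_of_lt this
    have hx1 : 1 ≤ x η := by
      have : 0 ≤ η / (s η : ℝ) ^ 2 := by positivity
      simp only [hx_def]; linarith
    exact ⟨hu0, hsR, hle, hub, hx1⟩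
  -- u → ∞
  have htu : Tendsto u atTop atTop := by
    apply esgd_tendsto_sqrt_atTop.comp
    exact (Tendsto.const_mul_atTop hκ1 tendsto_id).atTop_div_const (by norm_num)
  -- s → ∞ (as reals)
  have hts : Tendsto (fun η => (s η : ℝ)) atTop atTop := by
    apply tendsto_atTop_mono' atTop ?_ htu
    filter_upwards [eventually_ge_atTop (1 : ℝ)] with η hη
    exact (hbasic η hη).2.2.1
  -- u/s → 1
  have hratio : Tendsto (fun η => u η / (s η : ℝ)) atTop (nhds 1) := by
    apply tendsto_of_tendsto_of_tendsto_of_le_of_le'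
      (esgd_div_succ_tendsto.comp htu) tendsto_const_nhds
    · filter_upwards [eventually_ge_atTop (1 : ℝ)] with η hη
      obtain ⟨hu0, hsR, hle, hub, _⟩ := hbasic η hη
      exact div_le_div_of_nonneg_left (le_of_lt hu0) hsR hub
    · filter_upwards [eventually_ge_atTop (1 : ℝ)] with η hη
      obtain ⟨hu0, hsR, hle, hub, _⟩ := hbasic η hη
      exact (div_le_one hsR).mpr hle
  -- x → y
  have hx : Tendsto x atTop (nhds y) := by
    have h1 : Tendsto (fun η => 1 + (u η / (s η : ℝ)) ^ 2 * (2 / (κ - 1)))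
        atTop (nhds (1 + 1 ^ 2 * (2 / (κ - 1)))) :=
      tendsto_const_nhds.add ((hratio.pow 2).mul_const _)
    have h2 : (1 : ℝ) + 1 ^ 2 * (2 / (κ - 1)) = y := by simp [hy_def]
    rw [h2] at h1
    refine h1.congr' ?_
    filter_upwards [eventually_ge_atTop (1 : ℝ)] with η hη
    obtain ⟨hu0, hsR, hle, hub, _⟩ := hbasic η hη
    have hu2 : u η ^ 2 = (κ - 1) * η / 2 := Real.sq_sqrt (by positivity)
    have hs2 : (s η : ℝ) ^ 2 ≠ 0 := by positivity
    simp only [hx_def]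
    field_simp
    nlinarith [hu2]
  -- acosh x → acosh y
  have hcont : ContinuousAt esgdAcosh y := by
    have h1 : ContinuousAt (fun x : ℝ => x + Real.sqrt (x ^ 2 - 1)) y := by fun_prop
    exact ContinuousAt.log h1 (ne_of_gt (esgd_arg_pos hy1.le))
  have ht : Tendsto (fun η => esgdAcosh (x η)) atTop (nhds (esgdAcosh y)) :=
    hcont.tendsto.comp hx
  -- squeeze for the exponent
  set F : ℝ → ℝ := fun η =>
    Real.log (Real.cosh ((s η : ℝ) * esgdAcosh (x η))) * (-2 / (s η : ℝ)) with hF_def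
  have hlow : Tendsto (fun η => -2 * esgdAcosh (x η)) atTop (nhds (-2 * esgdAcosh y)) :=
    ht.const_mul _
  have hup : Tendsto (fun η => -2 * esgdAcosh (x η) + 2 * Real.log 2 / (s η : ℝ))
      atTop (nhds (-2 * esgdAcosh y)) := by
    have h0 : Tendsto (fun η => 2 * Real.log 2 / (s η : ℝ)) atTop (nhds 0) :=
      Tendsto.div_atTop tendsto_const_nhds hts
    simpa using hlow.add h0
  have hF : Tendsto F atTop (nhds (-2 * esgdAcosh y)) := by
    apply tendsto_of_tendsto_of_tendsto_of_le_of_le' hlow hup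
    · filter_upwards [eventually_ge_atTop (1 : ℝ)] with η hη
      obtain ⟨hu0, hsR, hle, hub, hx1⟩ := hbasic η hη
      have htnn : 0 ≤ esgdAcosh (x η) := esgd_acosh_nonneg hx1
      have hw : 0 ≤ (s η : ℝ) * esgdAcosh (x η) := by positivity
      have h1 : Real.log (Real.cosh ((s η : ℝ) * esgdAcosh (x η))) ≤
          (s η : ℝ) * esgdAcosh (x η) := esgd_log_cosh_le hw
      have hne : (s η : ℝ) ≠ 0 := ne_of_gt hsR
      have h3 : Real.log (Real.cosh ((s η : ℝ) * esgdAcosh (x η))) / (s η : ℝ) ≤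
          esgdAcosh (x η) := by
        rw [div_le_iff₀ hsR]; linarith [h1]
      have heq : Real.log (Real.cosh ((s η : ℝ) * esgdAcosh (x η))) * (-2 / (s η : ℝ)) =
          -2 * (Real.log (Real.cosh ((s η : ℝ) * esgdAcosh (x η))) / (s η : ℝ)) := by
        ring
      simp only [hF_def]
      rw [heq]
      linarith [h3]
    · filter_upwards [eventually_ge_atTop (1 : ℝ)] with η hη
      obtain ⟨hu0, hsR, hle, hub, hx1⟩ := hbasic η hη
      have h2 : (s η : ℝ) * esgdAcosh (x η) - Real.log 2 ≤
          Real.log (Real.cosh ((s η : ℝ) * esgdAcosh (x η))) := esgd_le_log_cosh _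
      have hne : (s η : ℝ) ≠ 0 := ne_of_gt hsR
      simp only [hF_def]
      have key : ((s η : ℝ) * esgdAcosh (x η) - Real.log 2) * (2 / (s η : ℝ)) ≤
          Real.log (Real.cosh ((s η : ℝ) * esgdAcosh (x η))) * (2 / (s η : ℝ)) := by
        apply mul_le_mul_of_nonneg_right h2; positivity
      have heq : ((s η : ℝ) * esgdAcosh (x η) - Real.log 2) * (2 / (s η : ℝ)) =
          2 * esgdAcosh (x η) - 2 * Real.log 2 / (s η : ℝ) := by field_simp
      rw [heq] at key
      have heq2 : Real.log (Real.cosh ((s η : ℝ) * esgdAcosh (x η))) * (-2 / (s η : ℝ)) =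
          -(Real.log (Real.cosh ((s η : ℝ) * esgdAcosh (x η))) * (2 / (s η : ℝ))) := by ring
      show Real.log (Real.cosh ((s η : ℝ) * esgdAcosh (x η))) * (-2 / (s η : ℝ)) ≤ _
      rw [heq2]
      linarith [key]
  -- final assembly
  have hexp : Tendsto (fun η => Real.exp (F η)) atTop
      (nhds (Real.exp (-2 * esgdAcosh y))) := (Real.continuous_exp.tendsto _).comp hF
  have hval : Real.exp (-2 * esgdAcosh y) = (y - Real.sqrt (y ^ 2 - 1)) ^ 2 := by
    rw [show (-2 : ℝ) * esgdAcosh y = -esgdAcosh y + -esgdAcosh y by ring, Real.exp_add,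
      esgd_exp_neg_acosh hy1.le]
    ring
  rw [← hval]
  refine hexp.congr' ?_
  filter_upwards [eventually_ge_atTop (1 : ℝ)] with η hη
  obtain ⟨hu0, hsR, hle, hub, hx1⟩ := hbasic η hη
  have hcheb : (Polynomial.Chebyshev.T ℝ ((s η : ℕ) : ℤ)).eval (x η) =
      Real.cosh ((s η : ℝ) * esgdAcosh (x η)) := by
    have := T_real_cosh (esgdAcosh (x η)) ((s η : ℕ) : ℤ)
    rw [esgd_cosh_acosh hx1] at this
    rw [this]; push_cast; ring_nf
  have hpos : 0 < Real.cosh ((s η : ℝ) * esgdAcosh (x η)) := Real.cosh_pos _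
  show Real.exp (F η) = _
  simp only [hF_def]
  rw [← Real.rpow_def_of_pos hpos, ← hcheb]
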